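/- With the block decomposition Pᵀ(A+μB)P = diag((λ₁+μ)B₁,…,(λ_k+μ)B_k), λ₁ > … > λ_k, if two distinct blocks B_i and B_j (i ≠ j) are both indefinite, then {μ ∈ ℝ : A + μB ⪰ 0} = ∅. -/

import Mathlib

open Matrix

lemma coef_zero_of_indef {n : ℕ} (N : Matrix (Fin n) (Fin n) ℝ) (c : ℝ)
    (h : (c • N).PosSemidef)
    (h1 : ∃ x, 0 < x ⬝ᵥ (N *ᵥ x)) (h2 : ∃ x, x ⬝ᵥ (N *ᵥ x) < 0) : c = 0 := by
  obtain ⟨x, hx⟩ := h1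
  obtain ⟨y, hy⟩ := h2
  have hx' := h.dotProduct_mulVec_nonneg x
  have hy' := h.dotProduct_mulVec_nonneg y
  simp only [smul_mulVec, dotProduct_smul, smul_eq_mul, RCLike.ofReal_real_eq_id, id_eq,
    star_trivial] at hx' hy'
  nlinarith

/-- Block decomposition Pᵀ(A+μB)P = diag((λᵢ+μ)Bᵢ), λ₁ > … > λ_k; if two distinct blocks
B_i and B_j are both indefinite then {μ : A + μB ⪰ 0} = ∅. -/
theorem psd_interval_empty_of_two_indefinite {k : ℕ} {m : Fin k → ℕ}
    (A B P : Matrix ((i : Fin k) × Fin (m i)) ((i : Fin k) × Fin (m i)) ℝ)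
    (hA : A.IsSymm) (hB : B.IsSymm) (hP : IsUnit P.det)
    (lam : Fin k → ℝ) (hlam : StrictAnti lam)
    (Bb : ∀ i, Matrix (Fin (m i)) (Fin (m i)) ℝ)
    (hBbsymm : ∀ i, (Bb i).IsSymm) (hBbinv : ∀ i, IsUnit (Bb i).det)
    (hPB : Pᵀ * B * P = Matrix.blockDiagonal' Bb)
    (hPA : Pᵀ * A * P = Matrix.blockDiagonal' (fun i => lam i • Bb i))
    (i j : Fin k) (hij : i ≠ j)
    (hi : (∃ x, 0 < x ⬝ᵥ (Bb i *ᵥ x)) ∧ (∃ x, x ⬝ᵥ (Bb i *ᵥ x) < 0))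
    (hj : (∃ x, 0 < x ⬝ᵥ (Bb j *ᵥ x)) ∧ (∃ x, x ⬝ᵥ (Bb j *ᵥ x) < 0)) :
    {μ : ℝ | (A + μ • B).PosSemidef} = ∅ := by
  ext μ
  simp only [Set.mem_setOf_eq, Set.mem_empty_iff_false, iff_false]
  intro hM
  have hD : Pᵀ * (A + μ • B) * P = Matrix.blockDiagonal' (fun l => (lam l + μ) • Bb l) := by
    rw [Matrix.mul_add, Matrix.add_mul, hPA]
    have : Pᵀ * (μ • B) * P = μ • (Pᵀ * B * P) := by
      rw [Matrix.mul_smul, Matrix.smul_mul]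
    rw [this, hPB, ← Matrix.blockDiagonal'_smul]
    rw [← Matrix.blockDiagonal'_add]
    have h2 : ((fun i => lam i • Bb i) + μ • Bb) = fun l => (lam l + μ) • Bb l := by
      funext l
      simp [add_smul]
    rw [h2]
  have hDps : (Matrix.blockDiagonal' (fun l => (lam l + μ) • Bb l)).PosSemidef := by
    rw [← hD]
    have := hM.conjTranspose_mul_mul_same P
    simpa using this
  have key : ∀ l : Fin k, (∃ x, 0 < x ⬝ᵥ (Bb l *ᵥ x)) → (∃ x, x ⬝ᵥ (Bb l *ᵥ x) < 0) →
      lam l + μ = 0 := by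
    intro l h1 h2
    have hsub := hDps.submatrix (fun a : Fin (m l) => (⟨l, a⟩ : (i : Fin k) × Fin (m i)))
    have heq : (Matrix.blockDiagonal' (fun l => (lam l + μ) • Bb l)).submatrix
        (fun a : Fin (m l) => (⟨l, a⟩ : (i : Fin k) × Fin (m i)))
        (fun a : Fin (m l) => (⟨l, a⟩ : (i : Fin k) × Fin (m i))) = (lam l + μ) • Bb l := by
      ext a b
      simp [Matrix.blockDiagonal'_apply_eq]
    rw [heq] at hsub
    exact coef_zero_of_indef _ _ hsub h1 h2
  have hli := key i hi.1 hi.2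
  have hlj := key j hj.1 hj.2
  have : lam i = lam j := by linarith
  exact hij (hlam.injective this)
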